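/- Let N ≥ 2, let J : Equiv.Perm (Fin N) → ℝ, let l be a duplicate-free list of elements of Fin N with k := l.length satisfying k + 1 < N, and let i, j be two distinct elements of Fin N not appearing in l. Let σ denote the transposition of the positions k and k+1 in Fin N. Suppose that for every permutation p of Fin N extending the list l ++ [j, i], one has J (p ∘ σ) = J p (note that p ∘ σ extends l ++ [i, j]). Then the minimum of J over all permutations extending l ++ [j, i] equals the minimum of J over all permutations extending l ++ [i, j]; consequently, the minimum of J over all permutations extending l equals the minimum of J over all permutations extending l that do not extend l ++ [j, i]. (Pairwise-collision pruning does not exclude any node containing the optimal solution.) -/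

import Mathlib

/-- A permutation `p` of `Fin N` extends the (incomplete) permutation given by the
list `l` if `p m = l.get m` for every index `m < l.length`. -/
def ExtendsList {N : ℕ} (p : Equiv.Perm (Fin N)) (l : List (Fin N)) : Prop :=
  ∀ (m : ℕ) (hm : m < l.length) (hN : m < N), p ⟨m, hN⟩ = l.get ⟨m, hm⟩

lemma extendsList_append_pair {N : ℕ} {l : List (Fin N)} (hk : l.length + 1 < N)
    (p : Equiv.Perm (Fin N)) (a b : Fin N) :
    ExtendsList p (l ++ [a, b]) ↔
      ExtendsList p l ∧ p ⟨l.length, Nat.lt_of_succ_lt hk⟩ = a ∧ p ⟨l.length + 1, hk⟩ = b := by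
  constructor
  · intro h
    refine ⟨fun m hm hN => ?_, ?_, ?_⟩
    · have := h m (by simp; omega) hN
      simpa [List.getElem_append_left hm] using this
    · have := h l.length (by simp) (Nat.lt_of_succ_lt hk)
      simpa [List.getElem_append_right (Nat.le_refl _)] using this
    · have := h (l.length + 1) (by simp) hk
      simpa [List.getElem_append_right (Nat.le_succ _)] using this
  · rintro ⟨h, h1, h2⟩ m hm hN
    rcases lt_trichotomy m l.length with hlt | heq | hgt
    · simpa [List.getElem_append_left hlt] using h m hlt hN
    · subst heq
      simpa [List.getElem_append_right (Nat.le_refl _)] using h1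
    · have : m = l.length + 1 := by simp at hm; omega
      subst this
      simpa [List.getElem_append_right (Nat.le_succ _)] using h2

/-- Pairwise-collision pruning does not exclude any node containing the optimal
solution. -/
theorem pairwise_collision_pruning (N : ℕ) (hN : 2 ≤ N)
    (J : Equiv.Perm (Fin N) → ℝ)
    (l : List (Fin N)) (hl : l.Nodup) (hk : l.length + 1 < N)
    (i j : Fin N) (hij : i ≠ j) (hi : i ∉ l) (hj : j ∉ l)
    (hswap : ∀ p : Equiv.Perm (Fin N), ExtendsList p (l ++ [j, i]) →
      J (p * Equiv.swap (⟨l.length, Nat.lt_of_succ_lt hk⟩ : Fin N)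
          (⟨l.length + 1, hk⟩ : Fin N)) = J p) :
    sInf (J '' {p : Equiv.Perm (Fin N) | ExtendsList p (l ++ [j, i])}) =
      sInf (J '' {p : Equiv.Perm (Fin N) | ExtendsList p (l ++ [i, j])}) ∧
    sInf (J '' {p : Equiv.Perm (Fin N) | ExtendsList p l}) =
      sInf (J '' {p : Equiv.Perm (Fin N) |
        ExtendsList p l ∧ ¬ ExtendsList p (l ++ [j, i])}) := by
  set a : Fin N := ⟨l.length, Nat.lt_of_succ_lt hk⟩
  set b : Fin N := ⟨l.length + 1, hk⟩
  set σ := Equiv.swap a b with hσ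
  have hab : a ≠ b := by simp [a, b, Fin.ext_iff]
  have mulσ : ∀ (p : Equiv.Perm (Fin N)),
      ExtendsList p (l ++ [j, i]) → ExtendsList (p * σ) (l ++ [i, j]) := by
    intro p hp
    rw [extendsList_append_pair hk] at hp ⊢
    obtain ⟨h0, h1, h2⟩ := hp
    refine ⟨fun m hm hN => ?_, ?_, ?_⟩
    · have hne1 : (⟨m, hN⟩ : Fin N) ≠ a := by simp [a, Fin.ext_iff]; omega
      have hne2 : (⟨m, hN⟩ : Fin N) ≠ b := by simp [b, Fin.ext_iff]; omega
      simpa [σ, Equiv.Perm.mul_apply, Equiv.swap_apply_of_ne_of_ne hne1 hne2]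
        using h0 m hm hN
    · simpa [σ, a, b, Equiv.Perm.mul_apply, Equiv.swap_apply_left] using h2
    · simpa [σ, a, b, Equiv.Perm.mul_apply, Equiv.swap_apply_right] using h1
  have mulσ' : ∀ (p : Equiv.Perm (Fin N)),
      ExtendsList p (l ++ [i, j]) → ExtendsList (p * σ) (l ++ [j, i]) := by
    intro p hp
    rw [extendsList_append_pair hk] at hp ⊢
    obtain ⟨h0, h1, h2⟩ := hp
    refine ⟨fun m hm hN => ?_, ?_, ?_⟩
    · have hne1 : (⟨m, hN⟩ : Fin N) ≠ a := by simp [a, Fin.ext_iff]; omega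
      have hne2 : (⟨m, hN⟩ : Fin N) ≠ b := by simp [b, Fin.ext_iff]; omega
      simpa [σ, Equiv.Perm.mul_apply, Equiv.swap_apply_of_ne_of_ne hne1 hne2]
        using h0 m hm hN
    · simpa [σ, a, b, Equiv.Perm.mul_apply, Equiv.swap_apply_left] using h2
    · simpa [σ, a, b, Equiv.Perm.mul_apply, Equiv.swap_apply_right] using h1
  have σσ : ∀ p : Equiv.Perm (Fin N), p * σ * σ = p := by
    intro p
    rw [mul_assoc, hσ, Equiv.swap_mul_self, mul_one]
  have himg : J '' {p : Equiv.Perm (Fin N) | ExtendsList p (l ++ [j, i])} =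
      J '' {p : Equiv.Perm (Fin N) | ExtendsList p (l ++ [i, j])} := by
    apply Set.Subset.antisymm
    · rintro x ⟨p, hp, rfl⟩
      exact ⟨p * σ, mulσ p hp, hswap p hp⟩
    · rintro x ⟨p, hp, rfl⟩
      refine ⟨p * σ, mulσ' p hp, ?_⟩
      have := hswap (p * σ) (mulσ' p hp)
      rw [σσ] at this; exact this.symm
  refine ⟨congrArg sInf himg, congrArg sInf ?_⟩
  apply Set.Subset.antisymm
  · rintro x ⟨p, hp, rfl⟩
    by_cases hc : ExtendsList p (l ++ [j, i])
    · refine ⟨p * σ, ⟨?_, ?_⟩, hswap p hc⟩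
      · exact ((extendsList_append_pair hk _ _ _).1 (mulσ p hc)).1
      · intro hcon
        have h1 := ((extendsList_append_pair hk _ _ _).1 (mulσ p hc)).2.1
        have h2 := ((extendsList_append_pair hk _ _ _).1 hcon).2.1
        rw [h1] at h2
        exact hij h2
    · exact ⟨p, ⟨hp, hc⟩, rfl⟩
  · rintro x ⟨p, hp, rfl⟩
    exact ⟨p, hp.1, rfl⟩
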